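/- Let β ∈ ℝ with β ≠ 0 and let ε ∈ {−1, 1}. Define f : ℝ → ℝ by f(ξ) = β·(ε·√(ξ² + β²) − β). Then for every ξ ∈ ℝ, f''(ξ)·f(ξ)³ + (f(ξ) − ξ·f'(ξ))³ = 0. -/

import Mathlib

/-- the two-branch family `f(ξ) = β(ε√(ξ² + β²) − β)`, `ε = ±1`,
`β ≠ 0`, solves the ODE `f''·f³ + (f − ξf')³ = 0` on all of `ℝ`. -/
theorem stmt_18 (β ε : ℝ) (hβ : β ≠ 0) (hε : ε ∈ ({-1, 1} : Set ℝ))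
    (f : ℝ → ℝ)
    (hf : f = fun ξ => β * (ε * Real.sqrt (ξ ^ 2 + β ^ 2) - β)) :
    ∀ ξ : ℝ,
      deriv (deriv f) ξ * f ξ ^ 3 + (f ξ - ξ * deriv f ξ) ^ 3 = 0 := by
  have hpos : ∀ ξ : ℝ, (0:ℝ) < ξ ^ 2 + β ^ 2 := fun ξ => by positivity
  have hsne : ∀ ξ : ℝ, Real.sqrt (ξ ^ 2 + β ^ 2) ≠ 0 := fun ξ =>
    ne_of_gt (Real.sqrt_pos.mpr (hpos ξ))
  have hsq : ∀ ξ : ℝ, Real.sqrt (ξ ^ 2 + β ^ 2) ^ 2 = ξ ^ 2 + β ^ 2 := fun ξ =>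
    Real.sq_sqrt (le_of_lt (hpos ξ))
  have hsd : ∀ ξ : ℝ, HasDerivAt (fun t => Real.sqrt (t ^ 2 + β ^ 2))
      (ξ / Real.sqrt (ξ ^ 2 + β ^ 2)) ξ := by
    intro ξ
    have h1 : HasDerivAt (fun t : ℝ => t ^ 2 + β ^ 2) (2 * ξ) ξ := by
      simpa using (hasDerivAt_pow 2 ξ).add_const (β ^ 2)
    have h2 := (Real.hasDerivAt_sqrt (ne_of_gt (hpos ξ))).comp ξ h1
    refine h2.congr_deriv ?_
    field_simp
  have hfd : ∀ ξ : ℝ, HasDerivAt f (β * (ε * (ξ / Real.sqrt (ξ ^ 2 + β ^ 2)))) ξ := by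
    intro ξ
    rw [hf]
    exact (((hsd ξ).const_mul ε).sub_const β).const_mul β
  have hd1 : deriv f = fun ξ => β * (ε * (ξ / Real.sqrt (ξ ^ 2 + β ^ 2))) := by
    funext ξ; exact (hfd ξ).deriv
  intro ξ
  set s := Real.sqrt (ξ ^ 2 + β ^ 2) with hs
  have hd2 : HasDerivAt (deriv f)
      (β * (ε * ((1 * s - ξ * (ξ / s)) / s ^ 2))) ξ := by
    rw [hd1]
    exact (((hasDerivAt_id ξ).div (hsd ξ) (hsne ξ)).const_mul ε).const_mul β
  rw [hd2.deriv, hd1, hf]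
  simp only
  rw [← hs]
  have hs0 : s ≠ 0 := hsne ξ
  have hB : s ^ 2 = ξ ^ 2 + β ^ 2 := hsq ξ
  clear_value s
  have e1 : (1 * s - ξ * (ξ / s)) / s ^ 2 = β ^ 2 / s ^ 3 := by
    field_simp
    linear_combination hB
  have e2 : β * (ε * s - β) - ξ * (β * (ε * (ξ / s))) = β * (ε * β ^ 2 / s - β) := by
    field_simp
    linear_combination ε * hB
  rw [e1, e2]
  simp only [Set.mem_insert_iff, Set.mem_singleton_iff] at hε
  rcases hε with h | h <;> subst h <;> field_simp <;> ring
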